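/- Let d ≥ 2, p ∈ (0, 2], and let μ be any Borel probability measure on the unit sphere S^{d−1} ⊂ ℝ^d. Then ∫∫_{S^{d−1}×S^{d−1}} |⟨x, y⟩ + 1/d|^p dμ(x) dμ(y) ≥ (d+1)^{p−1}/d^p, and equality holds when μ is the uniform (counting) probability measure on the d+1 vertices φ_1, …, φ_{d+1} of a regular simplex inscribed in S^{d−1} (unit vectors with ⟨φ_i, φ_j⟩ = −1/d for i ≠ j). In particular, the uniform distribution over the vertices of a regular simplex minimizes the energy I^Δ_{d,p}. -/

import Mathlib

open RealInnerProductSpace MeasureTheory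
open scoped ENNReal

-- continuous functions integrable on compact space, finite measure
lemma my_cont_integrable {X : Type*} [MeasurableSpace X] [TopologicalSpace X] [CompactSpace X]
    [OpensMeasurableSpace X] {Y : Type*} [NormedAddCommGroup Y]
    [TopologicalSpace.PseudoMetrizableSpace Y]
    {μ : Measure X} [IsFiniteMeasure μ] {f : X → Y} (hf : Continuous f) : Integrable f μ :=
  hf.integrable_of_hasCompactSupport
    (IsCompact.of_isClosed_subset isCompact_univ (isClosed_tsupport f) (Set.subset_univ _))

-- pointwise bound
lemma my_ptwise {d : ℕ} (hd : 2 ≤ d) {p : ℝ} (hp0 : 0 < p) (hp2 : p ≤ 2) {t : ℝ}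
    (ht : |t| ≤ 1) :
    (((d:ℝ)+1)/d) ^ (p-2) * (t + 1/d)^2 ≤ |t + 1/d| ^ p := by
  have hd0 : (0:ℝ) < d := by positivity
  set s := |t + 1/d| with hs
  have hs0 : 0 ≤ s := abs_nonneg _
  have hsle : s ≤ ((d:ℝ)+1)/d := by
    have h1 : |(1:ℝ)/d| = 1/d := abs_of_pos (by positivity)
    rw [hs]
    calc |t + 1/(d:ℝ)| ≤ |t| + |1/(d:ℝ)| := abs_add_le _ _
      _ ≤ 1 + 1/d := by rw [h1]; linarith
      _ = ((d:ℝ)+1)/d := by field_simp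
  have hsq : (t + 1/d)^2 = s^2 := (sq_abs _).symm
  rw [hsq]
  rcases eq_or_lt_of_le hs0 with h0 | h0
  · rw [← h0]
    simp [Real.zero_rpow (ne_of_gt hp0)]
  · have : s ^ p = s ^ (p-2) * s ^ (2:ℝ) := by
      rw [← Real.rpow_add h0]; ring_nf
    rw [this]
    have h2 : s ^ (2:ℝ) = s ^ 2 := by
      rw [Real.rpow_two]
    rw [h2]
    have hmono : (((d:ℝ)+1)/d) ^ (p-2) ≤ s ^ (p-2) :=
      Real.rpow_le_rpow_of_nonpos h0 hsle (by linarith)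
    exact mul_le_mul_of_nonneg_right hmono (by positivity)

noncomputable def myPsi (d : ℕ) (x : Metric.sphere (0 : EuclideanSpace ℝ (Fin d)) 1) :
    EuclideanSpace ℝ ((Fin d × Fin d) ⊕ (Fin d ⊕ Fin 1)) :=
  WithLp.toLp 2 (fun i : ((Fin d × Fin d) ⊕ (Fin d ⊕ Fin 1)) => Sum.elim (fun ij => x.1 ij.1 * x.1 ij.2)
    (Sum.elim (fun j => Real.sqrt (2/d) * x.1 j) (fun _ => (1:ℝ)/d)) i)

noncomputable def myV (d : ℕ) : EuclideanSpace ℝ ((Fin d × Fin d) ⊕ (Fin d ⊕ Fin 1)) :=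
  WithLp.toLp 2 (fun i : ((Fin d × Fin d) ⊕ (Fin d ⊕ Fin 1)) => Sum.elim (fun ij => if ij.1 = ij.2 then (1:ℝ) else 0)
    (Sum.elim (fun _ => 0) (fun _ => 1)) i)

lemma myPsi_cont (d : ℕ) : Continuous (myPsi d) := by
  have hcoord : ∀ j : Fin d, Continuous fun x : Metric.sphere (0 : EuclideanSpace ℝ (Fin d)) 1 =>
      x.1 j := fun j => (EuclideanSpace.proj j).continuous.comp continuous_subtype_val
  have : Continuous fun x : Metric.sphere (0 : EuclideanSpace ℝ (Fin d)) 1 =>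
      (fun i => myPsi d x i : ((Fin d × Fin d) ⊕ (Fin d ⊕ Fin 1)) → ℝ) := by
    apply continuous_pi
    rintro (⟨a, b⟩ | (j | k))
    · exact (hcoord a).mul (hcoord b)
    · exact continuous_const.mul (hcoord j)
    · exact continuous_const
  exact (PiLp.continuous_toLp 2 (fun _ : ((Fin d × Fin d) ⊕ (Fin d ⊕ Fin 1)) => ℝ)).comp this

lemma myPsi_inner (d : ℕ) (hd0 : (0:ℝ) < d)
    (x y : Metric.sphere (0 : EuclideanSpace ℝ (Fin d)) 1) :
    ⟪myPsi d x, myPsi d y⟫ =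
      (⟪(x : EuclideanSpace ℝ (Fin d)), (y : EuclideanSpace ℝ (Fin d))⟫ + 1/(d:ℝ))^2 := by
  have hr : Real.sqrt (2/(d:ℝ)) * Real.sqrt (2/(d:ℝ)) = 2/(d:ℝ) :=
    Real.mul_self_sqrt (by positivity)
  have hip : ⟪(x : EuclideanSpace ℝ (Fin d)), (y : EuclideanSpace ℝ (Fin d))⟫
      = ∑ i, x.1 i * y.1 i := by
    simp only [PiLp.inner_apply, RCLike.inner_apply, conj_trivial]
    exact Finset.sum_congr rfl fun _ _ => mul_comm _ _
  rw [real_inner_comm, PiLp.inner_apply]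
  simp only [RCLike.inner_apply, conj_trivial]
  rw [Fintype.sum_sum_type, Fintype.sum_sum_type]
  have h1 : ∑ ab : Fin d × Fin d, myPsi d x (Sum.inl ab) * myPsi d y (Sum.inl ab)
      = (∑ i, x.1 i * y.1 i)^2 := by
    rw [sq, Finset.sum_mul_sum, Fintype.sum_prod_type]
    refine Finset.sum_congr rfl fun a _ => Finset.sum_congr rfl fun b _ => ?_
    show (x.1 a * x.1 b) * (y.1 a * y.1 b) = _
    ring
  have h2 : ∑ j : Fin d, myPsi d x (Sum.inr (Sum.inl j)) * myPsi d y (Sum.inr (Sum.inl j))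
      = (2/(d:ℝ)) * ∑ i, x.1 i * y.1 i := by
    rw [Finset.mul_sum]
    refine Finset.sum_congr rfl fun j _ => ?_
    show (Real.sqrt (2/(d:ℝ)) * x.1 j) * (Real.sqrt (2/(d:ℝ)) * y.1 j) = _
    calc (Real.sqrt (2/(d:ℝ)) * x.1 j) * (Real.sqrt (2/(d:ℝ)) * y.1 j)
        = (Real.sqrt (2/(d:ℝ)) * Real.sqrt (2/(d:ℝ))) * (x.1 j * y.1 j) := by ring
      _ = (2/(d:ℝ)) * (x.1 j * y.1 j) := by rw [hr]
  have h3 : ∑ k : Fin 1, myPsi d x (Sum.inr (Sum.inr k)) * myPsi d y (Sum.inr (Sum.inr k))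
      = (1/(d:ℝ)) * (1/(d:ℝ)) := by
    simp [myPsi]
  rw [h1, h2, h3, hip]
  ring

lemma myV_inner_psi (d : ℕ) (x : Metric.sphere (0 : EuclideanSpace ℝ (Fin d)) 1) :
    ⟪myV d, myPsi d x⟫ = 1 + 1/(d:ℝ) := by
  have hnorm : ‖(x : EuclideanSpace ℝ (Fin d))‖ = 1 := by
    have := x.2
    rwa [mem_sphere_zero_iff_norm] at this
  have hself : ∑ i, x.1 i * x.1 i = 1 := by
    have h := real_inner_self_eq_norm_sq (x : EuclideanSpace ℝ (Fin d))
    rw [hnorm] at h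
    have hip : ⟪(x : EuclideanSpace ℝ (Fin d)), (x : EuclideanSpace ℝ (Fin d))⟫
        = ∑ i, x.1 i * x.1 i := by
      simp only [PiLp.inner_apply, RCLike.inner_apply, conj_trivial]
    rw [hip] at h
    simpa using h
  rw [real_inner_comm, PiLp.inner_apply]
  simp only [RCLike.inner_apply, conj_trivial]
  rw [Fintype.sum_sum_type, Fintype.sum_sum_type]
  have h1 : ∑ ab : Fin d × Fin d, myV d (Sum.inl ab) * myPsi d x (Sum.inl ab) = 1 := by
    rw [Fintype.sum_prod_type]
    have : ∀ a : Fin d, ∑ b : Fin d, myV d (Sum.inl (a, b)) * myPsi d x (Sum.inl (a, b))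
        = x.1 a * x.1 a := by
      intro a
      have : ∀ b : Fin d, myV d (Sum.inl (a, b)) * myPsi d x (Sum.inl (a, b))
          = if a = b then x.1 a * x.1 b else 0 := by
        intro b
        show (if a = b then (1:ℝ) else 0) * (x.1 a * x.1 b) = _
        by_cases h : a = b <;> simp [h]
      rw [Finset.sum_congr rfl fun b _ => this b]
      simp
    rw [Finset.sum_congr rfl fun a _ => this a, hself]
  have h2 : ∑ j : Fin d, myV d (Sum.inr (Sum.inl j)) * myPsi d x (Sum.inr (Sum.inl j)) = 0 := by
    simp [myV]
  have h3 : ∑ k : Fin 1, myV d (Sum.inr (Sum.inr k)) * myPsi d x (Sum.inr (Sum.inr k))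
      = 1/(d:ℝ) := by
    simp [myV, myPsi]
  rw [h1, h2, h3]; ring

lemma myV_inner_self (d : ℕ) : ⟪myV d, myV d⟫ = (d:ℝ) + 1 := by
  rw [PiLp.inner_apply]
  simp only [RCLike.inner_apply, conj_trivial]
  rw [Fintype.sum_sum_type, Fintype.sum_sum_type]
  have h1 : ∑ ab : Fin d × Fin d, myV d (Sum.inl ab) * myV d (Sum.inl ab) = (d:ℝ) := by
    rw [Fintype.sum_prod_type]
    have : ∀ a : Fin d, ∑ b : Fin d, myV d (Sum.inl (a, b)) * myV d (Sum.inl (a, b)) = 1 := by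
      intro a
      have : ∀ b : Fin d, myV d (Sum.inl (a, b)) * myV d (Sum.inl (a, b))
          = if a = b then (1:ℝ) else 0 := by
        intro b
        show (if a = b then (1:ℝ) else 0) * (if a = b then (1:ℝ) else 0) = _
        by_cases h : a = b <;> simp [h]
      rw [Finset.sum_congr rfl fun b _ => this b]
      simp
    rw [Finset.sum_congr rfl fun a _ => this a]
    simp
  have h2 : ∑ j : Fin d, myV d (Sum.inr (Sum.inl j)) * myV d (Sum.inr (Sum.inl j)) = 0 := by
    simp [myV]
  have h3 : ∑ k : Fin 1, myV d (Sum.inr (Sum.inr k)) * myV d (Sum.inr (Sum.inr k)) = 1 := by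
    simp [myV]
  rw [h1, h2, h3]; ring

lemma my_moment (d : ℕ) (hd : 2 ≤ d)
    (μ : Measure (Metric.sphere (0 : EuclideanSpace ℝ (Fin d)) 1))
    [IsProbabilityMeasure μ] :
    ((d:ℝ)+1)/(d:ℝ)^2 ≤ ∫ x, ∫ y,
      (⟪(x : EuclideanSpace ℝ (Fin d)), (y : EuclideanSpace ℝ (Fin d))⟫ + 1/(d:ℝ))^2 ∂μ ∂μ := by
  have hd0 : (0:ℝ) < d := by positivity
  have hint : Integrable (myPsi d) μ := my_cont_integrable (myPsi_cont d)
  set I := ∫ x, myPsi d x ∂μ with hI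
  have h1 : ∀ c, ∫ y, ⟪c, myPsi d y⟫ ∂μ = ⟪c, I⟫ := by
    intro c
    have := ContinuousLinearMap.integral_comp_comm (innerSL ℝ c) hint
    simpa using this
  have hiter : (∫ x, ∫ y,
      (⟪(x : EuclideanSpace ℝ (Fin d)), (y : EuclideanSpace ℝ (Fin d))⟫ + 1/(d:ℝ))^2 ∂μ ∂μ)
      = ⟪I, I⟫ := by
    have e1 : (fun x : Metric.sphere (0 : EuclideanSpace ℝ (Fin d)) 1 => ∫ y,
        (⟪(x : EuclideanSpace ℝ (Fin d)), (y : EuclideanSpace ℝ (Fin d))⟫ + 1/(d:ℝ))^2 ∂μ)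
        = fun x => ⟪I, myPsi d x⟫ := by
      funext x
      rw [show (fun y : Metric.sphere (0 : EuclideanSpace ℝ (Fin d)) 1 =>
        (⟪(x : EuclideanSpace ℝ (Fin d)), (y : EuclideanSpace ℝ (Fin d))⟫ + 1/(d:ℝ))^2)
        = fun y => ⟪myPsi d x, myPsi d y⟫ from funext fun y => (myPsi_inner d hd0 x y).symm]
      rw [h1 (myPsi d x), real_inner_comm]
    rw [e1]
    have e2 : (fun x => (⟪I, myPsi d x⟫ : ℝ)) = fun x => ⟪I, myPsi d x⟫ := rfl
    rw [show (∫ x, ⟪I, myPsi d x⟫ ∂μ) = ⟪I, I⟫ from h1 I]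
  rw [hiter]
  have hCS := real_inner_mul_inner_self_le (myV d) I
  have hv1 : ⟪myV d, I⟫ = ((d:ℝ)+1)/d := by
    rw [← h1 (myV d)]
    rw [show (fun y : Metric.sphere (0 : EuclideanSpace ℝ (Fin d)) 1 => (⟪myV d, myPsi d y⟫ : ℝ))
      = fun _ => 1 + 1/(d:ℝ) from funext fun y => myV_inner_psi d y]
    rw [integral_const]
    simp [measure_univ]
    field_simp
  rw [hv1, myV_inner_self] at hCS
  have hpos : (0:ℝ) < (d:ℝ) + 1 := by positivity
  calc ((d:ℝ)+1)/(d:ℝ)^2 = (((d:ℝ)+1)/d * (((d:ℝ)+1)/d)) / ((d:ℝ)+1) := by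
        field_simp
    _ ≤ (((d:ℝ)+1) * ⟪I, I⟫) / ((d:ℝ)+1) := by gcongr
    _ = ⟪I, I⟫ := by field_simp

lemma my_alg1 (d : ℕ) (hd : 2 ≤ d) (p : ℝ) :
    (((d:ℝ)+1)/d) ^ (p-2) * (((d:ℝ)+1)/(d:ℝ)^2) = ((d:ℝ)+1) ^ (p-1) / (d:ℝ) ^ p := by
  have hb : (0:ℝ) < d := by positivity
  have ha : (0:ℝ) < (d:ℝ)+1 := by positivity
  have h1 : (0:ℝ) < (d:ℝ) ^ p := Real.rpow_pos_of_pos hb p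
  have h2 : (0:ℝ) < ((d:ℝ)+1) ^ p := Real.rpow_pos_of_pos ha p
  rw [Real.div_rpow ha.le hb.le, Real.rpow_sub ha, Real.rpow_sub hb, Real.rpow_sub ha,
    Real.rpow_two, Real.rpow_two, Real.rpow_one]
  field_simp

lemma my_alg2 (d : ℕ) (hd : 2 ≤ d) (p : ℝ) :
    (((d:ℝ)+1)/d) ^ p / ((d:ℝ)+1) = ((d:ℝ)+1) ^ (p-1) / (d:ℝ) ^ p := by
  have hb : (0:ℝ) < d := by positivity
  have ha : (0:ℝ) < (d:ℝ)+1 := by positivity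
  have h1 : (0:ℝ) < (d:ℝ) ^ p := Real.rpow_pos_of_pos hb p
  have h2 : (0:ℝ) < ((d:ℝ)+1) ^ p := Real.rpow_pos_of_pos ha p
  rw [Real.div_rpow ha.le hb.le, Real.rpow_sub ha, Real.rpow_one]
  field_simp

lemma my_discrete (d : ℕ) {n : ℕ} (φ : Fin n → Metric.sphere (0 : EuclideanSpace ℝ (Fin d)) 1)
    (c : ℝ≥0∞) (f : Metric.sphere (0 : EuclideanSpace ℝ (Fin d)) 1 → ℝ) (hf : Continuous f) :
    ∫ x, f x ∂(c • ∑ i, Measure.dirac (φ i)) = c.toReal * ∑ i, f (φ i) := by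
  rw [integral_smul_measure,
    integral_finset_sum_measure (fun i _ => my_cont_integrable hf)]
  simp [integral_dirac]

theorem simplex_minimizes_energy (d : ℕ) (hd : 2 ≤ d) (p : ℝ) (hp0 : 0 < p)
    (hp2 : p ≤ 2) :
    (∀ μ : Measure (Metric.sphere (0 : EuclideanSpace ℝ (Fin d)) 1),
      IsProbabilityMeasure μ →
      ((d : ℝ) + 1) ^ (p - 1) / (d : ℝ) ^ p ≤
        ∫ x, ∫ y,
          |⟪(x : EuclideanSpace ℝ (Fin d)), (y : EuclideanSpace ℝ (Fin d))⟫ + 1 / (d : ℝ)| ^ p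
          ∂μ ∂μ) ∧
    (∀ φ : Fin (d + 1) → Metric.sphere (0 : EuclideanSpace ℝ (Fin d)) 1,
      (∀ i j, i ≠ j →
        ⟪(φ i : EuclideanSpace ℝ (Fin d)), (φ j : EuclideanSpace ℝ (Fin d))⟫ = -(1 / (d : ℝ))) →
      (∫ x, ∫ y,
          |⟪(x : EuclideanSpace ℝ (Fin d)), (y : EuclideanSpace ℝ (Fin d))⟫ + 1 / (d : ℝ)| ^ p
          ∂(((d : ℝ≥0∞) + 1)⁻¹ • ∑ i, Measure.dirac (φ i))
          ∂(((d : ℝ≥0∞) + 1)⁻¹ • ∑ i, Measure.dirac (φ i))) =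
        ((d : ℝ) + 1) ^ (p - 1) / (d : ℝ) ^ p) := by
  have hd0 : (0:ℝ) < d := by positivity
  have habs : ∀ x y : Metric.sphere (0 : EuclideanSpace ℝ (Fin d)) 1,
      |⟪(x : EuclideanSpace ℝ (Fin d)), (y : EuclideanSpace ℝ (Fin d))⟫| ≤ 1 := by
    intro x y
    have h1 : ‖(x : EuclideanSpace ℝ (Fin d))‖ = 1 := by
      have := x.2; rwa [mem_sphere_zero_iff_norm] at this
    have h2 : ‖(y : EuclideanSpace ℝ (Fin d))‖ = 1 := by
      have := y.2; rwa [mem_sphere_zero_iff_norm] at this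
    have := abs_real_inner_le_norm (x : EuclideanSpace ℝ (Fin d)) (y : EuclideanSpace ℝ (Fin d))
    rw [h1, h2] at this; simpa using this
  have hcont_in : Continuous fun z : (Metric.sphere (0 : EuclideanSpace ℝ (Fin d)) 1) ×
      (Metric.sphere (0 : EuclideanSpace ℝ (Fin d)) 1) =>
      (⟪(z.1 : EuclideanSpace ℝ (Fin d)), (z.2 : EuclideanSpace ℝ (Fin d))⟫ : ℝ) := by
    exact continuous_inner.comp ((continuous_subtype_val.comp continuous_fst).prodMk
      (continuous_subtype_val.comp continuous_snd))
  constructor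
  · intro μ hμ
    have hcontF : Continuous fun z : (Metric.sphere (0 : EuclideanSpace ℝ (Fin d)) 1) ×
        (Metric.sphere (0 : EuclideanSpace ℝ (Fin d)) 1) =>
        |⟪(z.1 : EuclideanSpace ℝ (Fin d)), (z.2 : EuclideanSpace ℝ (Fin d))⟫ + 1/(d:ℝ)| ^ p :=
      ((hcont_in.add continuous_const).abs).rpow_const fun z => Or.inr hp0.le
    have hcontG : Continuous fun z : (Metric.sphere (0 : EuclideanSpace ℝ (Fin d)) 1) ×
        (Metric.sphere (0 : EuclideanSpace ℝ (Fin d)) 1) =>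
        (⟪(z.1 : EuclideanSpace ℝ (Fin d)), (z.2 : EuclideanSpace ℝ (Fin d))⟫ + 1/(d:ℝ)) ^ 2 :=
      (hcont_in.add continuous_const).pow 2
    have hFint : Integrable (Function.uncurry fun x y :
        Metric.sphere (0 : EuclideanSpace ℝ (Fin d)) 1 =>
        |⟪(x : EuclideanSpace ℝ (Fin d)), (y : EuclideanSpace ℝ (Fin d))⟫ + 1/(d:ℝ)| ^ p)
        (μ.prod μ) := my_cont_integrable hcontF
    have hGint : Integrable (Function.uncurry fun x y :
        Metric.sphere (0 : EuclideanSpace ℝ (Fin d)) 1 =>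
        (⟪(x : EuclideanSpace ℝ (Fin d)), (y : EuclideanSpace ℝ (Fin d))⟫ + 1/(d:ℝ)) ^ 2)
        (μ.prod μ) := my_cont_integrable hcontG
    have hmono : ∀ z : (Metric.sphere (0 : EuclideanSpace ℝ (Fin d)) 1) ×
        (Metric.sphere (0 : EuclideanSpace ℝ (Fin d)) 1),
        (((d:ℝ)+1)/d) ^ (p-2) *
          (⟪(z.1 : EuclideanSpace ℝ (Fin d)), (z.2 : EuclideanSpace ℝ (Fin d))⟫ + 1/(d:ℝ)) ^ 2 ≤
        |⟪(z.1 : EuclideanSpace ℝ (Fin d)), (z.2 : EuclideanSpace ℝ (Fin d))⟫ + 1/(d:ℝ)| ^ p :=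
      fun z => my_ptwise hd hp0 hp2 (habs z.1 z.2)
    have hc0 : (0:ℝ) ≤ (((d:ℝ)+1)/d) ^ (p-2) := Real.rpow_nonneg (by positivity) _
    calc ((d : ℝ) + 1) ^ (p - 1) / (d : ℝ) ^ p
        = (((d:ℝ)+1)/d) ^ (p-2) * (((d:ℝ)+1)/(d:ℝ)^2) := (my_alg1 d hd p).symm
      _ ≤ (((d:ℝ)+1)/d) ^ (p-2) * ∫ x, ∫ y,
            (⟪(x : EuclideanSpace ℝ (Fin d)), (y : EuclideanSpace ℝ (Fin d))⟫ + 1/(d:ℝ))^2 ∂μ ∂μ :=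
          mul_le_mul_of_nonneg_left (my_moment d hd μ) hc0
      _ = (((d:ℝ)+1)/d) ^ (p-2) * ∫ z, (Function.uncurry fun x y :
            Metric.sphere (0 : EuclideanSpace ℝ (Fin d)) 1 =>
            (⟪(x : EuclideanSpace ℝ (Fin d)), (y : EuclideanSpace ℝ (Fin d))⟫ + 1/(d:ℝ)) ^ 2) z
            ∂(μ.prod μ) := by rw [MeasureTheory.integral_integral hGint]; rfl
      _ = ∫ z, (((d:ℝ)+1)/d) ^ (p-2) * (Function.uncurry fun x y :
            Metric.sphere (0 : EuclideanSpace ℝ (Fin d)) 1 =>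
            (⟪(x : EuclideanSpace ℝ (Fin d)), (y : EuclideanSpace ℝ (Fin d))⟫ + 1/(d:ℝ)) ^ 2) z
            ∂(μ.prod μ) := (integral_const_mul _ _).symm
      _ ≤ ∫ z, (Function.uncurry fun x y :
            Metric.sphere (0 : EuclideanSpace ℝ (Fin d)) 1 =>
            |⟪(x : EuclideanSpace ℝ (Fin d)), (y : EuclideanSpace ℝ (Fin d))⟫ + 1/(d:ℝ)| ^ p) z
            ∂(μ.prod μ) :=
          integral_mono (hGint.const_mul _) hFint (fun z => hmono z)
      _ = ∫ x, ∫ y,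
            |⟪(x : EuclideanSpace ℝ (Fin d)), (y : EuclideanSpace ℝ (Fin d))⟫ + 1/(d:ℝ)| ^ p
            ∂μ ∂μ := (MeasureTheory.integral_integral hFint).symm
  · intro φ hφ
    have htr : (((d : ℝ≥0∞) + 1)⁻¹).toReal = ((d:ℝ)+1)⁻¹ := by
      rw [ENNReal.toReal_inv, ENNReal.toReal_add (by simp) (by simp)]
      simp
    have hcy : ∀ x : Metric.sphere (0 : EuclideanSpace ℝ (Fin d)) 1,
        Continuous fun y : Metric.sphere (0 : EuclideanSpace ℝ (Fin d)) 1 =>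
        |⟪(x : EuclideanSpace ℝ (Fin d)), (y : EuclideanSpace ℝ (Fin d))⟫ + 1/(d:ℝ)| ^ p := by
      intro x
      have : Continuous fun y : Metric.sphere (0 : EuclideanSpace ℝ (Fin d)) 1 =>
          (⟪(x : EuclideanSpace ℝ (Fin d)), (y : EuclideanSpace ℝ (Fin d))⟫ : ℝ) :=
        (continuous_const.inner (continuous_subtype_val))
      exact ((this.add continuous_const).abs).rpow_const fun z => Or.inr hp0.le
    have hterm : ∀ i j, |⟪((φ i) : EuclideanSpace ℝ (Fin d)), ((φ j) : EuclideanSpace ℝ (Fin d))⟫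
        + 1/(d:ℝ)| ^ p = if j = i then (((d:ℝ)+1)/d) ^ p else 0 := by
      intro i j
      by_cases h : j = i
      · subst h
        have h1 : ‖((φ j) : EuclideanSpace ℝ (Fin d))‖ = 1 := by
          have := (φ j).2; rwa [mem_sphere_zero_iff_norm] at this
        have h2 : ⟪((φ j) : EuclideanSpace ℝ (Fin d)), ((φ j) : EuclideanSpace ℝ (Fin d))⟫
            = 1 := by
          rw [real_inner_self_eq_norm_sq, h1]; norm_num
        rw [h2, if_pos rfl]
        rw [abs_of_pos (by positivity)]
        congr 1
        field_simp
      · rw [hφ i j (fun hh => h hh.symm), if_neg h]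
        simp [Real.zero_rpow hp0.ne']
    -- inner integral
    have hinner : ∀ x : Metric.sphere (0 : EuclideanSpace ℝ (Fin d)) 1,
        (∫ y, |⟪(x : EuclideanSpace ℝ (Fin d)), (y : EuclideanSpace ℝ (Fin d))⟫ + 1/(d:ℝ)| ^ p
          ∂(((d : ℝ≥0∞) + 1)⁻¹ • ∑ i, Measure.dirac (φ i)))
        = ((d:ℝ)+1)⁻¹ * ∑ j, |⟪(x : EuclideanSpace ℝ (Fin d)),
            ((φ j) : EuclideanSpace ℝ (Fin d))⟫ + 1/(d:ℝ)| ^ p := by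
      intro x
      rw [my_discrete d φ _ _ (hcy x), htr]
    rw [show (fun x : Metric.sphere (0 : EuclideanSpace ℝ (Fin d)) 1 =>
        ∫ y, |⟪(x : EuclideanSpace ℝ (Fin d)), (y : EuclideanSpace ℝ (Fin d))⟫ + 1/(d:ℝ)| ^ p
          ∂(((d : ℝ≥0∞) + 1)⁻¹ • ∑ i, Measure.dirac (φ i)))
        = fun x : Metric.sphere (0 : EuclideanSpace ℝ (Fin d)) 1 =>
            ((d:ℝ)+1)⁻¹ * ∑ j, |⟪(x : EuclideanSpace ℝ (Fin d)),
            ((φ j) : EuclideanSpace ℝ (Fin d))⟫ + 1/(d:ℝ)| ^ p from funext hinner]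
    have hcout : Continuous fun x : Metric.sphere (0 : EuclideanSpace ℝ (Fin d)) 1 =>
        ((d:ℝ)+1)⁻¹ * ∑ j, |⟪(x : EuclideanSpace ℝ (Fin d)),
          ((φ j) : EuclideanSpace ℝ (Fin d))⟫ + 1/(d:ℝ)| ^ p := by
      refine continuous_const.mul (continuous_finset_sum _ fun j _ => ?_)
      have : Continuous fun x : Metric.sphere (0 : EuclideanSpace ℝ (Fin d)) 1 =>
          (⟪(x : EuclideanSpace ℝ (Fin d)), ((φ j) : EuclideanSpace ℝ (Fin d))⟫ : ℝ) :=
        (continuous_subtype_val.inner continuous_const)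
      exact ((this.add continuous_const).abs).rpow_const fun z => Or.inr hp0.le
    rw [my_discrete d φ _ _ hcout, htr]
    have hsum : ∀ i : Fin (d+1), ∑ j, |⟪((φ i) : EuclideanSpace ℝ (Fin d)),
        ((φ j) : EuclideanSpace ℝ (Fin d))⟫ + 1/(d:ℝ)| ^ p = (((d:ℝ)+1)/d) ^ p := by
      intro i
      rw [Finset.sum_congr rfl fun j _ => hterm i j]
      simp
    rw [Finset.sum_congr rfl fun i _ => by rw [hsum i]]
    rw [Finset.sum_const]
    simp only [Finset.card_univ, Fintype.card_fin, nsmul_eq_mul]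
    rw [← my_alg2 d hd p]
    push_cast
    have h : ((d:ℝ)+1) ≠ 0 := by positivity
    field_simp
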